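/- (Kalmár's lemma) Let A be a formula all of whose atoms occur among the distinct atoms B₁, B₂, …, B_k, and let g be any Boolean valuation. Writing X^g for X when g(X) = 1 and for (¬X) when g(X) = 0, the sequence B₁^g, B₂^g, …, B_k^g ⊢ A^g is derivable in NPC. -/

import Mathlib

/-- Propositional formulas over a type `V` of atoms, built from atoms by
conjunction and negation. -/
inductive Formula (V : Type*) : Type _
  | atom : V → Formula V
  | conj : Formula V → Formula V → Formula V
  | neg  : Formula V → Formula V

/-- Natural propositional calculus (NPC) derivability `Γ ⊢ A`. -/
inductive NPC {V : Type*} : List (Formula V) → Formula V → Prop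
  | ax (C : Formula V) : NPC [C] C
  | andElimLeft {Γ : List (Formula V)} {A B : Formula V} :
      NPC Γ (Formula.conj A B) → NPC Γ A
  | andElimRight {Γ : List (Formula V)} {A B : Formula V} :
      NPC Γ (Formula.conj A B) → NPC Γ B
  | andIntro {Γ₁ Γ₂ : List (Formula V)} {A B : Formula V} :
      NPC Γ₁ A → NPC Γ₂ B → NPC (Γ₁ ++ Γ₂) (Formula.conj A B)
  | negElim {Γ : List (Formula V)} {C : Formula V} :
      NPC Γ (Formula.neg (Formula.neg C)) → NPC Γ C
  | negIntro {Γ₁ Γ₂ : List (Formula V)} {A C : Formula V} :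
      NPC (Γ₁ ++ [C]) A → NPC (Γ₂ ++ [C]) (Formula.neg A) →
      NPC (Γ₁ ++ Γ₂) (Formula.neg C)

/-- A Boolean valuation: a `{0,1}`-valued function on formulas respecting
negation and conjunction. -/
structure BooleanValuation (V : Type*) where
  g : Formula V → ℕ
  range01 : ∀ A, g A = 0 ∨ g A = 1
  neg_eq : ∀ A, g (Formula.neg A) = 1 - g A
  conj_eq : ∀ A B, g (Formula.conj A B) = g A * g B

/-- The list of atoms occurring in a formula. -/
def Formula.atoms {V : Type*} : Formula V → List V
  | Formula.atom v => [v]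
  | Formula.conj A B => A.atoms ++ B.atoms
  | Formula.neg A => A.atoms

/-- `X^g`: the formula `X` itself if `g(X) = 1`, and `(¬X)` if `g(X) = 0`. -/
noncomputable def signed {V : Type*} (g : BooleanValuation V) (X : Formula V) :
    Formula V :=
  if g.g X = 1 then X else Formula.neg X

section Structural

variable {V : Type*}

/-- Weakening by appending a formula at the end of the context. -/
lemma NPC.wA {Γ : List (Formula V)} {A : Formula V} (h : NPC Γ A) (D : Formula V) :
    NPC (Γ ++ [D]) A :=
  (h.andIntro (NPC.ax D)).andElimLeft

/-- Weakening by prepending a formula at the front of the context. -/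
lemma NPC.wP {Γ : List (Formula V)} {A : Formula V} (h : NPC Γ A) (D : Formula V) :
    NPC (D :: Γ) A :=
  ((NPC.ax D).andIntro h).andElimRight

/-- Weakening by prepending a whole list. -/
lemma NPC.wPL {Γ : List (Formula V)} {A : Formula V} (h : NPC Γ A) :
    ∀ E : List (Formula V), NPC (E ++ Γ) A := by
  intro E
  induction E with
  | nil => simpa using h
  | cons e E ih => exact ih.wP e

/-- Double negation introduction. -/
lemma NPC.dni {Γ : List (Formula V)} {A : Formula V} (h : NPC Γ A) :
    NPC Γ (Formula.neg (Formula.neg A)) := by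
  have := NPC.negIntro (Γ₂ := []) (h.wA (Formula.neg A)) (NPC.ax (Formula.neg A))
  simpa using this

/-- Rotation: move the last formula of the context to the front. -/
lemma NPC.rotate1 {Γ : List (Formula V)} {x W : Formula V} (h : NPC (Γ ++ [x]) W) :
    NPC (x :: Γ) W := by
  have h9 : NPC (Γ ++ [Formula.neg W]) (Formula.neg x) :=
    NPC.negIntro h ((NPC.ax (Formula.neg W)).wA x)
  have h10 : NPC ([x] ++ Γ) (Formula.neg (Formula.neg W)) :=
    NPC.negIntro ((NPC.ax x).wA (Formula.neg W)) h9
  simpa using h10.negElim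

/-- Block rotation. -/
lemma NPC.rotBlock {W : Formula V} :
    ∀ (Y X : List (Formula V)), NPC (X ++ Y) W → NPC (Y ++ X) W := by
  intro Y
  induction Y using List.reverseRecOn with
  | nil => intro X h; simpa using h
  | append_singleton Y' y ih =>
      intro X h
      have h1 : NPC ((X ++ Y') ++ [y]) W := by simpa [List.append_assoc] using h
      have h2 : NPC ((y :: X) ++ Y') W := by
        simpa using h1.rotate1
      have h3 := ih (y :: X) h2
      simpa [List.append_assoc] using h3

/-- Absorption (contraction): a final hypothesis already occurring in the
context can be contracted. -/
lemma NPC.absorb {Ψ₁ Ψ₂ : List (Formula V)} {D W : Formula V}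
    (h : NPC ((Ψ₁ ++ [D] ++ Ψ₂) ++ [D]) W) : NPC ((Ψ₁ ++ Ψ₂) ++ [D]) W := by
  have ha : NPC ((Ψ₁ ++ [D] ++ Ψ₂) ++ [Formula.neg W]) (Formula.neg D) :=
    NPC.negIntro h ((NPC.ax (Formula.neg W)).wA D)
  have hb : NPC ((Ψ₂ ++ [Formula.neg W]) ++ (Ψ₁ ++ [D])) (Formula.neg D) := by
    apply NPC.rotBlock
    simpa [List.append_assoc] using ha
  have hc : NPC (((Ψ₂ ++ [Formula.neg W]) ++ Ψ₁) ++ []) (Formula.neg D) :=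
    NPC.negIntro (by simpa [List.append_assoc] using hb) ((NPC.ax D).dni)
  have hd : NPC ((Ψ₁ ++ Ψ₂) ++ [Formula.neg W]) (Formula.neg D) := by
    apply NPC.rotBlock (Ψ₁ ++ Ψ₂) [Formula.neg W]
    have h1 : NPC (([Formula.neg W] ++ Ψ₁) ++ Ψ₂) (Formula.neg D) := by
      apply NPC.rotBlock
      simpa [List.append_assoc] using hc
    simpa [List.append_assoc] using h1
  have he : NPC ((Ψ₁ ++ Ψ₂) ++ [D]) (Formula.neg (Formula.neg W)) :=
    NPC.negIntro hd (((NPC.ax D).wA (Formula.neg W)).dni)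
  exact he.negElim

/-- Permutation admissibility (with an extra suffix, for the induction). -/
lemma NPC.permAux {W : Formula V} :
    ∀ (Γ' S Γ : List (Formula V)), Γ.Perm Γ' → NPC (Γ ++ S) W → NPC (Γ' ++ S) W := by
  intro Γ'
  induction Γ' using List.reverseRecOn with
  | nil =>
      intro S Γ hp h
      rwa [hp.eq_nil] at h
  | append_singleton Γ'' x ih =>
      intro S Γ hp h
      have hx : x ∈ Γ := hp.symm.subset (by simp)
      obtain ⟨Γ₁, Γ₂, rfl⟩ := List.append_of_mem hx
      have h1 : NPC (S ++ (Γ₁ ++ x :: Γ₂)) W := NPC.rotBlock _ _ h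
      have h2 : NPC (((S ++ Γ₁) ++ [x] ++ Γ₂) ++ [x]) W := by
        have := h1.wA x
        simpa [List.append_assoc] using this
      have h3 : NPC (((S ++ Γ₁) ++ Γ₂) ++ [x]) W := NPC.absorb h2
      have h4 : NPC ((Γ₁ ++ Γ₂) ++ ([x] ++ S)) W := by
        have := NPC.rotBlock ((Γ₁ ++ Γ₂) ++ [x]) S (by simpa [List.append_assoc] using h3)
        simpa [List.append_assoc] using this
      have hp' : (Γ₁ ++ Γ₂).Perm Γ'' := by
        have e1 : (Γ₁ ++ x :: Γ₂).Perm (x :: (Γ₁ ++ Γ₂)) := List.perm_middle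
        have e2 : (Γ'' ++ [x]).Perm (x :: Γ'') := List.perm_append_singleton x Γ''
        exact (e1.symm.trans (hp.trans e2)).cons_inv
      have h5 := ih ([x] ++ S) (Γ₁ ++ Γ₂) hp' h4
      simpa [List.append_assoc] using h5

/-- Permutation admissibility. -/
lemma NPC.perm {Γ Γ' : List (Formula V)} {W : Formula V}
    (h : NPC Γ W) (hp : Γ.Perm Γ') : NPC Γ' W := by
  have := NPC.permAux Γ' [] Γ hp (by simpa using h)
  simpa using this

/-- Core of the structural ("master") lemma. -/
lemma NPC.masterAux {W : Formula V} (Δ : List (Formula V)) :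
    ∀ Γ : List (Formula V), (∀ x ∈ Γ, x ∈ Δ) → NPC (Δ ++ Γ) W → NPC Δ W := by
  intro Γ
  induction Γ using List.reverseRecOn with
  | nil => intro _ h; simpa using h
  | append_singleton Γ' x ih =>
      intro hsub h
      have hx : x ∈ Δ := hsub x (by simp)
      obtain ⟨Δ₁, Δ₂, hΔ⟩ := List.append_of_mem hx
      have h2 : NPC ((Δ₁ ++ [x] ++ (Δ₂ ++ Γ')) ++ [x]) W := by
        rw [hΔ] at h
        simpa [List.append_assoc] using h
      have h3 : NPC ((Δ₁ ++ (Δ₂ ++ Γ')) ++ [x]) W := NPC.absorb h2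
      have h4 : NPC (Δ ++ Γ') W := by
        apply NPC.perm h3
        rw [hΔ]
        have hperm := List.Perm.append_left Δ₁ (List.perm_append_singleton x (Δ₂ ++ Γ')).symm
        simpa [List.append_assoc] using hperm.symm
      exact ih (fun y hy => hsub y (by simp [hy])) h4

/-- Master structural lemma: a derivable sequent stays derivable over any
context containing (as a set) the original one. -/
lemma NPC.master {Γ Δ : List (Formula V)} {W : Formula V}
    (h : NPC Γ W) (hs : ∀ x ∈ Γ, x ∈ Δ) : NPC Δ W :=
  NPC.masterAux Δ Γ hs (h.wPL Δ)

/-- Shared-context conjunction introduction. -/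
lemma NPC.sharedAnd {Δ : List (Formula V)} {X Y : Formula V}
    (h1 : NPC Δ X) (h2 : NPC Δ Y) : NPC Δ (Formula.conj X Y) :=
  NPC.master (h1.andIntro h2) (by intro x hx; simp only [List.mem_append] at hx; tauto)

end Structural

/-- Lm. 2 (Kalmár's lemma): if all atoms of `A` occur among the distinct atoms
`B₁, …, B_k` (given as a list `L` of atoms without duplicates) and `g` is any
Boolean valuation, then the sequence `B₁^g, …, B_k^g ⊢ A^g` is derivable in
NPC. -/
theorem kalmar_lemma {V : Type*} (A : Formula V) (L : List V) (hL : L.Nodup)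
    (hsub : ∀ v ∈ A.atoms, v ∈ L) (g : BooleanValuation V) :
    NPC (L.map fun v => signed g (Formula.atom v)) (signed g A) := by
  revert hsub
  induction A with
  | atom v =>
      intro hsub
      have hv : v ∈ L := hsub v (by simp [Formula.atoms])
      refine NPC.master (NPC.ax (signed g (Formula.atom v))) ?_
      intro x hx
      simp only [List.mem_singleton] at hx
      subst hx
      exact List.mem_map_of_mem hv
  | conj X Y ihX ihY =>
      intro hsub
      have hX := ihX (fun v hv => hsub v (by simp [Formula.atoms, hv]))
      have hY := ihY (fun v hv => hsub v (by simp [Formula.atoms, hv]))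
      rcases g.range01 X with hx0 | hx1
      · have hc : g.g (Formula.conj X Y) = 0 := by
          rw [g.conj_eq, hx0, zero_mul]
        have hsgn : signed g (Formula.conj X Y) = Formula.neg (Formula.conj X Y) := by
          simp [signed, hc]
        have hXn : signed g X = Formula.neg X := by simp [signed, hx0]
        rw [hsgn]
        rw [hXn] at hX
        have p1 : NPC ([] ++ [Formula.conj X Y]) X := (NPC.ax _).andElimLeft
        have p2 : NPC ((L.map fun v => signed g (Formula.atom v)) ++ [Formula.conj X Y])
            (Formula.neg X) := hX.wA _
        simpa using NPC.negIntro p1 p2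
      · rcases g.range01 Y with hy0 | hy1
        · have hc : g.g (Formula.conj X Y) = 0 := by
            rw [g.conj_eq, hy0, mul_zero]
          have hsgn : signed g (Formula.conj X Y) = Formula.neg (Formula.conj X Y) := by
            simp [signed, hc]
          have hYn : signed g Y = Formula.neg Y := by simp [signed, hy0]
          rw [hsgn]
          rw [hYn] at hY
          have p1 : NPC ([] ++ [Formula.conj X Y]) Y := (NPC.ax _).andElimRight
          have p2 : NPC ((L.map fun v => signed g (Formula.atom v)) ++ [Formula.conj X Y])
              (Formula.neg Y) := hY.wA _
          simpa using NPC.negIntro p1 p2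
        · have hc : g.g (Formula.conj X Y) = 1 := by
            rw [g.conj_eq, hx1, hy1]
          have hsgn : signed g (Formula.conj X Y) = Formula.conj X Y := by
            simp [signed, hc]
          rw [hsgn]
          rw [show signed g X = X by simp [signed, hx1]] at hX
          rw [show signed g Y = Y by simp [signed, hy1]] at hY
          exact hX.sharedAnd hY
  | neg B ihB =>
      intro hsub
      have hB := ihB (fun v hv => hsub v (by simpa [Formula.atoms] using hv))
      rcases g.range01 B with h0 | h1
      · have hn : g.g (Formula.neg B) = 1 := by rw [g.neg_eq, h0]
        have hsgn : signed g (Formula.neg B) = Formula.neg B := by simp [signed, hn]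
        rw [show signed g B = Formula.neg B by simp [signed, h0]] at hB
        rw [hsgn]
        exact hB
      · have hn : g.g (Formula.neg B) = 0 := by rw [g.neg_eq, h1]
        have hsgn : signed g (Formula.neg B) = Formula.neg (Formula.neg B) := by
          simp [signed, hn]
        rw [show signed g B = B by simp [signed, h1]] at hB
        rw [hsgn]
        exact hB.dni
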